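/- For all f : [0,1] → ℝ continuous with f(0), f(1) ∈ ℤ and all n ≥ 1, the Kantorovich integer Bernstein polynomial satisfies |B̃_n(f)(x) − B_n f(x)| ≤ 1/n for every x ∈ [0,1], where B̃_n(f)(x) = ∑_{k=0}^n ⌊f(k/n) C(n,k)⌋ x^k (1−x)^{n−k} and B_n f(x) = ∑_{k=0}^n f(k/n) C(n,k) x^k (1−x)^{n−k}. -/
import Mathlib


open Finset

lemma le_choose_of_lt (n k : ℕ) (h1 : 1 ≤ k) (h2 : k < n) : n ≤ n.choose k := by
  induction n generalizing k with
  | zero => omega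
  | succ m ih =>
    rcases eq_or_lt_of_le h1 with h | h
    · simp [← h]
    · obtain ⟨j, rfl⟩ : ∃ j, k = j + 1 := ⟨k - 1, by omega⟩
      rw [Nat.choose_succ_succ, Nat.succ_eq_add_one]
      have hij : m ≤ m.choose j := ih j (by omega) (by omega)
      have hpos : 1 ≤ m.choose (j + 1) := Nat.choose_pos (by omega)
      omega

theorem kantorovich_bernstein_close (f : ℝ → ℝ)
    (hf : ContinuousOn f (Set.Icc (0:ℝ) 1))
    (h0 : ∃ m : ℤ, f 0 = m) (h1 : ∃ m : ℤ, f 1 = m)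
    (n : ℕ) (hn : 1 ≤ n) (x : ℝ) (hx : x ∈ Set.Icc (0:ℝ) 1) :
    |(∑ k ∈ Finset.range (n + 1),
        (⌊f ((k : ℝ) / n) * (n.choose k : ℝ)⌋ : ℝ) * x ^ k * (1 - x) ^ (n - k))
      - ∑ k ∈ Finset.range (n + 1),
        f ((k : ℝ) / n) * (n.choose k : ℝ) * x ^ k * (1 - x) ^ (n - k)| ≤ 1 / n := by
  obtain ⟨hx0, hx1⟩ := hx
  obtain ⟨m0, hm0⟩ := h0
  obtain ⟨m1, hm1⟩ := h1
  have hnR : (0:ℝ) < n := by exact_mod_cast hn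
  have hx1' : (0:ℝ) ≤ 1 - x := by linarith
  -- binomial theorem
  have hbinom : ∑ k ∈ Finset.range (n + 1),
      (n.choose k : ℝ) * x ^ k * (1 - x) ^ (n - k) = 1 := by
    have h := add_pow x (1 - x) n
    simp only [add_sub_cancel, one_pow] at h
    calc ∑ k ∈ Finset.range (n + 1), (n.choose k : ℝ) * x ^ k * (1 - x) ^ (n - k)
        = ∑ k ∈ Finset.range (n + 1), x ^ k * (1 - x) ^ (n - k) * (n.choose k : ℝ) :=
          Finset.sum_congr rfl fun k _ => by ring
      _ = 1 := h.symm
  rw [← Finset.sum_sub_distrib]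
  calc |∑ k ∈ Finset.range (n + 1),
        ((⌊f ((k : ℝ) / n) * (n.choose k : ℝ)⌋ : ℝ) * x ^ k * (1 - x) ^ (n - k)
          - f ((k : ℝ) / n) * (n.choose k : ℝ) * x ^ k * (1 - x) ^ (n - k))|
      ≤ ∑ k ∈ Finset.range (n + 1),
        |(⌊f ((k : ℝ) / n) * (n.choose k : ℝ)⌋ : ℝ) * x ^ k * (1 - x) ^ (n - k)
          - f ((k : ℝ) / n) * (n.choose k : ℝ) * x ^ k * (1 - x) ^ (n - k)| :=
        Finset.abs_sum_le_sum_abs _ _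
    _ ≤ ∑ k ∈ Finset.range (n + 1),
        (1 / n) * ((n.choose k : ℝ) * x ^ k * (1 - x) ^ (n - k)) := by
        apply Finset.sum_le_sum
        intro k hk
        rw [Finset.mem_range] at hk
        set a := f ((k : ℝ) / n) * (n.choose k : ℝ) with ha
        have hterm : (⌊a⌋ : ℝ) * x ^ k * (1 - x) ^ (n - k)
            - a * x ^ k * (1 - x) ^ (n - k)
            = ((⌊a⌋ : ℝ) - a) * (x ^ k * (1 - x) ^ (n - k)) := by ring
        rw [hterm, abs_mul, abs_of_nonneg (show (0:ℝ) ≤ x ^ k * (1 - x) ^ (n - k) by positivity)]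
        have hCnn : (0:ℝ) ≤ (n.choose k : ℝ) := by positivity
        rcases eq_or_ne k 0 with rfl | hk0
        · have : a = (m0 : ℝ) := by simp [ha, hm0]
          rw [this]
          simp only [Int.floor_intCast]
          simp
          positivity
        rcases eq_or_ne k n with rfl | hkn
        · have : a = (m1 : ℝ) := by
            simp [ha, div_self (ne_of_gt hnR), hm1]
          rw [this]
          simp only [Int.floor_intCast]
          simp
          positivity
        · have hfl : |(⌊a⌋ : ℝ) - a| ≤ 1 := by
            have h1 := Int.floor_le a
            have h2 := Int.lt_floor_add_one a
            rw [abs_le]; constructor <;> linarith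
          have hchoose : (n : ℝ) ≤ (n.choose k : ℝ) := by
            exact_mod_cast le_choose_of_lt n k (by omega) (by omega)
          have h1C : (1:ℝ) ≤ 1 / n * (n.choose k : ℝ) := by
            rw [div_mul_eq_mul_div, le_div_iff₀ hnR]
            linarith
          calc |(⌊a⌋ : ℝ) - a| * (x ^ k * (1 - x) ^ (n - k))
              ≤ 1 * (x ^ k * (1 - x) ^ (n - k)) := by
                apply mul_le_mul_of_nonneg_right hfl (by positivity)
            _ ≤ (1 / n * (n.choose k : ℝ)) * (x ^ k * (1 - x) ^ (n - k)) := by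
                apply mul_le_mul_of_nonneg_right h1C (by positivity)
            _ = 1 / n * ((n.choose k : ℝ) * x ^ k * (1 - x) ^ (n - k)) := by ring
    _ = 1 / n := by rw [← Finset.mul_sum, hbinom, mul_one]
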